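/- Let σ ∈ (0,1), λ > 0, and let w, v ∈ H satisfy λ‖B(w) − B(v)‖ ≤ σ‖w − v‖ for a map B : H → H. Set φ = (w − v) − λ(B(w) − B(v)) and assume φ ≠ 0. Then the quantity δ = ⟨w − v, φ⟩/‖φ‖² satisfies (1 − σ)/(1 + σ)² ≤ δ ≤ 1/(1 − σ). -/

import Mathlib

open RealInnerProductSpace

/-- Under the line-search condition, the step coefficient
`δ = ⟨w - v, φ⟩/‖φ‖²` satisfies `(1 - σ)/(1 + σ)² ≤ δ ≤ 1/(1 - σ)`. -/
theorem delta_bounds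
    {H : Type*} [NormedAddCommGroup H] [InnerProductSpace ℝ H] [CompleteSpace H]
    (σ lam : ℝ) (hσ : σ ∈ Set.Ioo (0 : ℝ) 1) (hlam : 0 < lam)
    (B : H → H) (w v : H)
    (hls : lam * ‖B w - B v‖ ≤ σ * ‖w - v‖)
    (φ : H) (hφdef : φ = (w - v) - lam • (B w - B v)) (hφ : φ ≠ 0)
    (δ : ℝ) (hδ : δ = ⟪w - v, φ⟫ / ‖φ‖ ^ 2) :
    (1 - σ) / (1 + σ) ^ 2 ≤ δ ∧ δ ≤ 1 / (1 - σ) := by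
  obtain ⟨hσ0, hσ1⟩ := hσ
  set u := w - v with hu
  set z := lam • (B w - B v) with hz
  have hznorm : ‖z‖ ≤ σ * ‖u‖ := by
    rw [hz, norm_smul, Real.norm_eq_abs, abs_of_pos hlam]; exact hls
  have hb : 0 < ‖φ‖ := norm_pos_iff.mpr hφ
  have ha : 0 < ‖u‖ := by
    rcases eq_or_lt_of_le (norm_nonneg u) with h | h
    · exfalso
      have hz0 : ‖z‖ ≤ 0 := by nlinarith
      have : φ = u - z := hφdef
      have : ‖φ‖ ≤ ‖u‖ + ‖z‖ := by rw [this]; exact norm_sub_le _ _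
      nlinarith
    · exact h
  -- φ = u - z
  have hφuz : φ = u - z := hφdef
  -- bound: ‖φ‖ ≤ (1+σ)‖u‖
  have hble : ‖φ‖ ≤ (1 + σ) * ‖u‖ := by
    have := norm_sub_le u z
    rw [← hφuz] at this
    nlinarith
  -- bound: (1-σ)‖u‖ ≤ ‖φ‖
  have hbge : (1 - σ) * ‖u‖ ≤ ‖φ‖ := by
    have h1 : ‖u‖ ≤ ‖φ‖ + ‖z‖ := by
      calc ‖u‖ = ‖φ + z‖ := by rw [hφuz, sub_add_cancel]
        _ ≤ ‖φ‖ + ‖z‖ := norm_add_le _ _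
    nlinarith
  -- inner product bounds
  have hip_lower : (1 - σ) * ‖u‖ ^ 2 ≤ ⟪u, φ⟫ := by
    have hexp : ⟪u, φ⟫ = ‖u‖ ^ 2 - ⟪u, z⟫ := by
      rw [hφuz, inner_sub_right, real_inner_self_eq_norm_sq]
    have hcs : ⟪u, z⟫ ≤ ‖u‖ * ‖z‖ := real_inner_le_norm u z
    nlinarith
  have hip_upper : ⟪u, φ⟫ ≤ ‖u‖ * ‖φ‖ := real_inner_le_norm u φ
  have hb2 : (0:ℝ) < ‖φ‖ ^ 2 := by positivity
  constructor
  · rw [hδ, le_div_iff₀ hb2]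
    calc (1 - σ) / (1 + σ) ^ 2 * ‖φ‖ ^ 2
        ≤ (1 - σ) / (1 + σ) ^ 2 * ((1 + σ) * ‖u‖) ^ 2 := by
          apply mul_le_mul_of_nonneg_left _ (div_nonneg (by linarith) (by positivity))
          exact pow_le_pow_left₀ (norm_nonneg φ) hble 2
      _ = (1 - σ) * ‖u‖ ^ 2 := by field_simp
      _ ≤ ⟪u, φ⟫ := hip_lower
  · rw [hδ, div_le_div_iff₀ hb2 (by linarith)]
    calc ⟪u, φ⟫ * (1 - σ) ≤ ‖u‖ * ‖φ‖ * (1 - σ) := by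
          apply mul_le_mul_of_nonneg_right hip_upper (by linarith)
      _ = (1 - σ) * ‖u‖ * ‖φ‖ := by ring
      _ ≤ ‖φ‖ * ‖φ‖ := mul_le_mul_of_nonneg_right hbge (norm_nonneg φ)
      _ = 1 * ‖φ‖ ^ 2 := by ring
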